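/- Let λ₀, λ₁ : (0,1) → ℝ be twice differentiable functions with λ₀′(p) > 0 for all p ∈ (0,1) and satisfying p·λ₁′(p) + (1−p)·λ₀′(p) = 0 for all p ∈ (0,1). Then for every p ∈ (0,1): (λ₀′(p)·λ₁″(p) − λ₁′(p)·λ₀″(p)) / (λ₀′(p)·λ₁′(p)·(λ₁′(p) − λ₀′(p))) = 1 / ((1−p)·λ₀′(p)). -/

import Mathlib

open Set

/-- If `λ₀, λ₁` are twice differentiable on `(0,1)` with `λ₀' > 0` and satisfy the
first-order propriety condition `p·λ₁'(p) + (1-p)·λ₀'(p) = 0`, then the ratio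
`k_λ(p)/k_ln(p)` of signed curvatures equals `1/((1-p)·λ₀'(p))` on `(0,1)`. -/
theorem curvature_ratio_eq (l0 l1 : ℝ → ℝ)
    (hd0 : ∀ p ∈ Ioo (0:ℝ) 1, DifferentiableAt ℝ l0 p)
    (hd1 : ∀ p ∈ Ioo (0:ℝ) 1, DifferentiableAt ℝ l1 p)
    (hd0' : ∀ p ∈ Ioo (0:ℝ) 1, DifferentiableAt ℝ (deriv l0) p)
    (hd1' : ∀ p ∈ Ioo (0:ℝ) 1, DifferentiableAt ℝ (deriv l1) p)
    (hpos : ∀ p ∈ Ioo (0:ℝ) 1, 0 < deriv l0 p)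
    (hfoc : ∀ p ∈ Ioo (0:ℝ) 1, p * deriv l1 p + (1 - p) * deriv l0 p = 0) :
    ∀ p ∈ Ioo (0:ℝ) 1,
      (deriv l0 p * deriv (deriv l1) p - deriv l1 p * deriv (deriv l0) p) /
          (deriv l0 p * deriv l1 p * (deriv l1 p - deriv l0 p)) =
        1 / ((1 - p) * deriv l0 p) := by
  intro p hp
  obtain ⟨hp0, hp1⟩ := hp
  set a := deriv l0 p with ha
  set b := deriv l1 p with hb
  set A := deriv (deriv l0) p with hA
  set B := deriv (deriv l1) p with hB
  have hpmem : p ∈ Ioo (0:ℝ) 1 := ⟨hp0, hp1⟩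
  have ha0 : 0 < a := hpos p hpmem
  have hfoc' : p * b + (1 - p) * a = 0 := hfoc p hpmem
  -- derivative of the FOC
  have hD : HasDerivAt (fun x => x * deriv l1 x + (1 - x) * deriv l0 x)
      (1 * b + p * B + ((0 - 1) * a + (1 - p) * A)) p := by
    exact ((hasDerivAt_id p).mul ((hd1' p hpmem).hasDerivAt)).add
      (((hasDerivAt_const p (1:ℝ)).sub (hasDerivAt_id p)).mul ((hd0' p hpmem).hasDerivAt))
  have heq : (fun x => x * deriv l1 x + (1 - x) * deriv l0 x) =ᶠ[nhds p] (fun _ => (0:ℝ)) := by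
    filter_upwards [Ioo_mem_nhds hp0 hp1] with x hx using hfoc x hx
  have hzero : (1 * b + p * B + ((0 - 1) * a + (1 - p) * A)) = 0 := by
    have := hD.deriv
    rw [Filter.EventuallyEq.deriv_eq heq] at this
    simpa using this.symm
  -- algebra
  have hb_eq : b = -((1 - p) * a) / p := by
    field_simp
    linarith
  have hnum : a * B - b * A = a ^ 2 / p ^ 2 := by
    have hPB : p * B + (1 - p) * A = a - b := by linarith
    rw [eq_div_iff (by positivity)]
    linear_combination p * a * hPB + (-(p * A) - a) * hfoc'
  have hden : a * b * (b - a) = (1 - p) * a ^ 3 / p ^ 2 := by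
    rw [hb_eq]
    field_simp
    ring
  rw [hnum, hden]
  have h1 : (1:ℝ) - p > 0 := by linarith
  have hp' : (p:ℝ) ≠ 0 := ne_of_gt hp0
  have ha' : a ≠ 0 := ne_of_gt ha0
  have h1' : (1:ℝ) - p ≠ 0 := ne_of_gt h1
  field_simp
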